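/- Let curly-G = (G, A, B) be a bipartite graph and let X be a set of vertices of G. If curly-G' = (G', A', B') is a bipartite graph that can be obtained from curly-G by successively pivoting on edges with neither end in X, then curly-G'[X] is a rho_G(X)-pivot-perturbation of curly-G[X]. -/

import Mathlib

namespace EP

variable {V W : Type}

/-- Local complementation of `G` at `v`. -/
def localComp (G : SimpleGraph V) (v : V) : SimpleGraph V where
  Adj x y := x ≠ y ∧
    ((G.Adj v x ∧ G.Adj v y ∧ ¬ G.Adj x y) ∨ (¬(G.Adj v x ∧ G.Adj v y) ∧ G.Adj x y))
  symm := ⟨by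
    intro x y h
    obtain ⟨hxy, h⟩ := h
    refine ⟨hxy.symm, ?_⟩
    rcases h with ⟨h1, h2, h3⟩ | ⟨h1, h2⟩
    · exact Or.inl ⟨h2, h1, fun h => h3 h.symm⟩
    · exact Or.inr ⟨fun h => h1 ⟨h.2, h.1⟩, h2.symm⟩⟩
  loopless := ⟨fun x h => h.1 rfl⟩

/-- The pivot `G × uv := G * u * v * u`. -/
def pivot (G : SimpleGraph V) (u v : V) : SimpleGraph V :=
  localComp (localComp (localComp G u) v) u

open Classical in
/-- The cut-rank of `X` in `G`: the rank over `GF(2)` of the `X × Xᶜ` submatrix of the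
adjacency matrix of `G`. -/
noncomputable def cutRank [Fintype V] (G : SimpleGraph V) (X : Set V) : ℕ :=
  (Matrix.of fun (x : X) (y : ↥Xᶜ) => if G.Adj x.1 y.1 then (1 : ZMod 2) else 0).rank

/-- A bipartite graph `(G, A, B)`: the sides `A` and `B` are disjoint, cover all the
vertices, and every edge has one end in each side. -/
structure BipGraph (V : Type) where
  graph : SimpleGraph V
  left : Set V
  right : Set V
  disj : Disjoint left right
  union : left ∪ right = Set.univ
  cross : ∀ x y, graph.Adj x y → (x ∈ left ↔ y ∈ right)

/-- One pivot step on a bipartite graph: pivot on an edge `uv` with `u ∈ A`, `v ∈ B`,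
and exchange the sides of `u` and `v`. -/
def BipPivotStep (𝒢 ℋ : BipGraph V) : Prop :=
  ∃ u v : V, 𝒢.graph.Adj u v ∧ u ∈ 𝒢.left ∧ v ∈ 𝒢.right ∧
    ℋ.graph = pivot 𝒢.graph u v ∧
    ℋ.left = insert v (𝒢.left \ {u}) ∧ ℋ.right = insert u (𝒢.right \ {v})

/-- Two bipartite graphs are pivot-equivalent if one is obtained from the other by a
sequence of pivots. -/
def PivotEquiv (𝒢 𝒢' : BipGraph V) : Prop :=
  Relation.ReflTransGen BipPivotStep 𝒢 𝒢'

/-- `ℋ` is a pivot-minor of `𝒢`, located at the embedding `f` (which also respects the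
sides): some bipartite graph pivot-equivalent to `𝒢` induces a copy of `ℋ` on the image
of `f` (equivalently, `ℋ` is obtained from `𝒢` by a sequence of pivots and vertex
deletions). -/
def IsPivotMinorAt (𝒢 : BipGraph V) (ℋ : BipGraph W) (f : W ↪ V) : Prop :=
  ∃ 𝒢' : BipGraph V, PivotEquiv 𝒢 𝒢' ∧
    (∀ x y, ℋ.graph.Adj x y ↔ 𝒢'.graph.Adj (f x) (f y)) ∧
    (∀ x, x ∈ ℋ.left ↔ f x ∈ 𝒢'.left)

/-- `𝒢` has a pivot-minor strongly isomorphic to `ℋ`. -/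
def HasPivotMinor (𝒢 : BipGraph V) (ℋ : BipGraph W) : Prop :=
  ∃ f : W ↪ V, IsPivotMinorAt 𝒢 ℋ f

/-- `𝒢₁` is a `t`-pivot-perturbation of `𝒢₂`: they have the same vertex set `V`, and some
bipartite graph with at most `t` more vertices contains both of them as pivot-minors
(on `V`). -/
def IsPivotPerturbation (t : ℕ) (𝒢₁ 𝒢₂ : BipGraph V) : Prop :=
  ∃ s : ℕ, s ≤ t ∧ ∃ Gbig : BipGraph (V ⊕ Fin s),
    IsPivotMinorAt Gbig 𝒢₁ ⟨Sum.inl, Sum.inl_injective⟩ ∧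
    IsPivotMinorAt Gbig 𝒢₂ ⟨Sum.inl, Sum.inl_injective⟩

/-- `𝒢` is `t`-pivot-robust for `ℋ` if every `t`-pivot-perturbation of `𝒢` has a
pivot-minor strongly isomorphic to `ℋ`. -/
def PivotRobust (t : ℕ) (𝒢 : BipGraph V) (ℋ : BipGraph W) : Prop :=
  ∀ 𝒢' : BipGraph V, IsPivotPerturbation t 𝒢' 𝒢 → HasPivotMinor 𝒢' ℋ

/-- The sub-bipartite-graph of `𝒢` induced on `X`. -/
def BipGraph.induce (𝒢 : BipGraph V) (X : Set V) : BipGraph X where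
  graph := 𝒢.graph.induce X
  left := {x : X | (x : V) ∈ 𝒢.left}
  right := {x : X | (x : V) ∈ 𝒢.right}
  disj := by
    rw [Set.disjoint_left]
    intro a ha hb
    exact Set.disjoint_left.mp 𝒢.disj ha hb
  union := by
    ext x
    have : (x : V) ∈ 𝒢.left ∪ 𝒢.right := 𝒢.union ▸ Set.mem_univ _
    simpa using this
  cross := fun x y h => 𝒢.cross x y h

/-- The disjoint union of `k` copies of the bipartite graph `ℋ`. -/
def BipGraph.copies (k : ℕ) (ℋ : BipGraph W) : BipGraph (Fin k × W) where
  graph := { Adj := fun x y => x.1 = y.1 ∧ ℋ.graph.Adj x.2 y.2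
             symm := ⟨fun _ _ h => ⟨h.1.symm, h.2.symm⟩⟩
             loopless := ⟨fun x h => ℋ.graph.loopless.irrefl x.2 h.2⟩ }
  left := {p | p.2 ∈ ℋ.left}
  right := {p | p.2 ∈ ℋ.right}
  disj := by
    rw [Set.disjoint_left]
    intro a ha hb
    exact Set.disjoint_left.mp ℋ.disj ha hb
  union := by
    ext p
    have : p.2 ∈ ℋ.left ∪ ℋ.right := ℋ.union ▸ Set.mem_univ _
    simpa using this
  cross := fun x y h => ℋ.cross x.2 y.2 h.2

/-- `𝒢'` is obtained from `𝒢` by a sequence of pivots on edges with neither end in `X`. -/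
def PivotEquivAvoiding (X : Set V) (𝒢 𝒢' : BipGraph V) : Prop :=
  Relation.ReflTransGen
    (fun 𝒜 ℬ => ∃ u v : V, u ∉ X ∧ v ∉ X ∧
      𝒜.graph.Adj u v ∧ u ∈ 𝒜.left ∧ v ∈ 𝒜.right ∧
      ℬ.graph = pivot 𝒜.graph u v ∧
      ℬ.left = insert v (𝒜.left \ {u}) ∧ ℬ.right = insert u (𝒜.right \ {v}))
    𝒢 𝒢'

open Classical

noncomputable def gmat (G : SimpleGraph V) : Matrix V V (ZMod 2) :=
  fun a b => if G.Adj a b then 1 else 0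

lemma gmat_eq_one_iff {G : SimpleGraph V} {a b : V} : gmat G a b = 1 ↔ G.Adj a b := by
  unfold gmat; split <;> simp_all

lemma gmat_symm (G : SimpleGraph V) (a b : V) : gmat G a b = gmat G b a := by
  unfold gmat
  by_cases h : G.Adj a b
  · simp [h, h.symm]
  · have h' : ¬ G.Adj b a := fun h' => h h'.symm
    simp [h, h']

lemma gmat_diag (G : SimpleGraph V) (a : V) : gmat G a a = 0 := by
  simp [gmat]

noncomputable def lcM (M : Matrix V V (ZMod 2)) (w : V) : Matrix V V (ZMod 2) :=
  fun a b => if a = b then 0 else M a b + M w a * M w b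

lemma gmat_localComp (G : SimpleGraph V) (w : V) :
    gmat (localComp G w) = lcM (gmat G) w := by
  funext a b
  by_cases hab : a = b
  · subst hab; simp [lcM, gmat]
  · show gmat _ a b = _
    unfold gmat lcM localComp
    simp only [hab, if_false]
    by_cases h1 : G.Adj w a <;> by_cases h2 : G.Adj w b <;> by_cases h3 : G.Adj a b <;>
      simp [h1, h2, h3, hab] <;> decide

noncomputable def pivotMat (M : Matrix V V (ZMod 2)) (u v : V) : Matrix V V (ZMod 2) :=
  fun a b =>
    if a = b then 0 else
      M (Equiv.swap u v a) (Equiv.swap u v b) +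
        (if a ≠ u ∧ a ≠ v ∧ b ≠ u ∧ b ≠ v then M u a * M v b + M v a * M u b else 0)

lemma two_cases (z : ZMod 2) : z = 0 ∨ z = 1 := by
  fin_cases z
  · exact Or.inl rfl
  · exact Or.inr rfl

set_option maxHeartbeats 1000000 in
lemma lc3_eq_pivotMat (M : Matrix V V (ZMod 2)) (u v : V)
    (hsym : ∀ a b, M a b = M b a) (hdiag : ∀ a, M a a = 0) (huv : M u v = 1) :
    lcM (lcM (lcM M u) v) u = pivotMat M u v := by
  have huvne : u ≠ v := by
    rintro rfl; rw [hdiag] at huv; exact absurd huv (by decide)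
  have hvune : v ≠ u := Ne.symm huvne
  have hvu : M v u = 1 := by rw [hsym]; exact huv
  funext a b
  unfold pivotMat
  by_cases hab : a = b
  · subst hab; simp [lcM]
  rcases eq_or_ne u a with rfl | hua
  · rcases eq_or_ne v b with rfl | hvb
    · -- (u, v)
      simp [lcM, hab, huvne, hvune, hdiag, huv, hvu, CharTwo.add_self_eq_zero] <;> decide
    · rcases eq_or_ne u b with rfl | hub
      · exact absurd rfl hab
      · -- (u, b)
        rcases two_cases (M u b) with h2|h2 <;> rcases two_cases (M v b) with h4|h4 <;>
          simp [lcM, hab, hub, hvb, Ne.symm hub, Ne.symm hvb, huvne, hvune,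
            Equiv.swap_apply_left, Equiv.swap_apply_right,
            Equiv.swap_apply_of_ne_of_ne (Ne.symm hub) (Ne.symm hvb),
            hdiag, huv, hvu, h2, h4, hsym b u, hsym b v, CharTwo.add_self_eq_zero] <;> decide
  · rcases eq_or_ne v a with rfl | hva
    · rcases eq_or_ne u b with rfl | hub
      · -- (v, u)
        simp [lcM, hab, huvne, hvune, hdiag, huv, hvu, CharTwo.add_self_eq_zero] <;> decide
      · rcases eq_or_ne v b with rfl | hvb
        · exact absurd rfl hab
        · -- (v, b)
          rcases two_cases (M u b) with h2|h2 <;> rcases two_cases (M v b) with h4|h4 <;>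
            simp [lcM, hab, hub, hvb, Ne.symm hub, Ne.symm hvb, huvne, hvune,
              Equiv.swap_apply_left, Equiv.swap_apply_right,
              Equiv.swap_apply_of_ne_of_ne (Ne.symm hub) (Ne.symm hvb),
              hdiag, huv, hvu, h2, h4, hsym b u, hsym b v, CharTwo.add_self_eq_zero] <;> decide
    · rcases eq_or_ne u b with rfl | hub
      · -- (a, u)
        rcases two_cases (M u a) with h1|h1 <;> rcases two_cases (M v a) with h3|h3 <;>
          simp [lcM, hab, hua, hva, Ne.symm hua, Ne.symm hva, huvne, hvune,
            Equiv.swap_apply_left, Equiv.swap_apply_right,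
            Equiv.swap_apply_of_ne_of_ne (Ne.symm hua) (Ne.symm hva),
            hdiag, huv, hvu, h1, h3, hsym a u, hsym a v, CharTwo.add_self_eq_zero] <;> decide
      · rcases eq_or_ne v b with rfl | hvb
        · -- (a, v)
          rcases two_cases (M u a) with h1|h1 <;> rcases two_cases (M v a) with h3|h3 <;>
            simp [lcM, hab, hua, hva, Ne.symm hua, Ne.symm hva, huvne, hvune,
              Equiv.swap_apply_left, Equiv.swap_apply_right,
              Equiv.swap_apply_of_ne_of_ne (Ne.symm hua) (Ne.symm hva),
              hdiag, huv, hvu, h1, h3, hsym a u, hsym a v, CharTwo.add_self_eq_zero] <;> decide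
        · -- generic
          rcases two_cases (M u a) with h1|h1 <;>
          rcases two_cases (M u b) with h2|h2 <;>
          rcases two_cases (M v a) with h3|h3 <;>
          rcases two_cases (M v b) with h4|h4 <;>
          rcases two_cases (M a b) with h5|h5 <;>
            simp [lcM, hab, hua, hva, hub, hvb, Ne.symm hua, Ne.symm hva, Ne.symm hub,
              Ne.symm hvb, huvne, hvune,
              Equiv.swap_apply_of_ne_of_ne (Ne.symm hua) (Ne.symm hva),
              Equiv.swap_apply_of_ne_of_ne (Ne.symm hub) (Ne.symm hvb),
              hdiag, huv, hvu, h1, h2, h3, h4, h5, hsym a u, hsym a v, hsym b u, hsym b v, CharTwo.add_self_eq_zero] <;> decide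

lemma gmat_pivot {G : SimpleGraph V} {u v : V} (huv : G.Adj u v) :
    gmat (pivot G u v) = pivotMat (gmat G) u v := by
  unfold pivot
  rw [gmat_localComp, gmat_localComp, gmat_localComp]
  exact lc3_eq_pivotMat _ u v (gmat_symm G) (gmat_diag G) (gmat_eq_one_iff.2 huv)

/-- The graph defined by a `ZMod 2` matrix. -/
def matGraph {α : Type} (M : Matrix α α (ZMod 2)) : SimpleGraph α where
  Adj a b := a ≠ b ∧ M a b = 1 ∧ M b a = 1
  symm := ⟨fun _ _ ⟨h1, h2, h3⟩ => ⟨h1.symm, h3, h2⟩⟩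
  loopless := ⟨fun _ h => h.1 rfl⟩

lemma gmat_matGraph {α : Type} {M : Matrix α α (ZMod 2)}
    (hs : ∀ a b, M a b = M b a) (hd : ∀ a, M a a = 0) : gmat (matGraph M) = M := by
  funext a b
  by_cases hab : a = b
  · subst hab; simp [gmat, matGraph, hd]
  · rcases two_cases (M a b) with h | h <;>
      simp [gmat, matGraph, hab, h, hs b a ▸ h]

lemma graph_eq_of_gmat_eq {α : Type} {G H : SimpleGraph α} (h : gmat G = gmat H) : G = H := by
  ext a b
  rw [← gmat_eq_one_iff, ← gmat_eq_one_iff, h]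

lemma pivotMat_symm {M : Matrix V V (ZMod 2)} (hs : ∀ a b, M a b = M b a) (u v : V) :
    ∀ a b, pivotMat M u v a b = pivotMat M u v b a := by
  intro a b
  unfold pivotMat
  by_cases hab : a = b
  · subst hab; simp
  · rw [if_neg hab, if_neg (Ne.symm hab), hs (Equiv.swap u v a) (Equiv.swap u v b)]
    congr 1
    by_cases hg : a ≠ u ∧ a ≠ v ∧ b ≠ u ∧ b ≠ v
    · rw [if_pos hg, if_pos (show b ≠ u ∧ b ≠ v ∧ a ≠ u ∧ a ≠ v by tauto)]
      ring
    · rw [if_neg hg, if_neg (show ¬(b ≠ u ∧ b ≠ v ∧ a ≠ u ∧ a ≠ v) by tauto)]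

lemma pivotMat_diag (M : Matrix V V (ZMod 2)) (u v a : V) : pivotMat M u v a a = 0 := by
  simp [pivotMat]

lemma cite_pos {c : Prop} (hc : c) {α : Sort*} {t e : α} :
    @ite _ c (Classical.propDecidable c) t e = t := by
  rw [if_pos hc]

lemma cite_neg {c : Prop} (hc : ¬c) {α : Sort*} {t e : α} :
    @ite _ c (Classical.propDecidable c) t e = e := by
  rw [if_neg hc]

lemma cite_zero {c : Prop} {t : ZMod 2} (h : c → t = 0) :
    @ite _ c (Classical.propDecidable c) t 0 = 0 := by
  by_cases hc : c
  · rw [cite_pos hc]; exact h hc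
  · rw [cite_neg hc]

lemma matGraph_pivot {M : Matrix V V (ZMod 2)}
    (hs : ∀ a b, M a b = M b a) (hd : ∀ a, M a a = 0) {u v : V} (h1 : M u v = 1) :
    pivot (matGraph M) u v = matGraph (pivotMat M u v) := by
  have hne : u ≠ v := by rintro rfl; rw [hd] at h1; exact absurd h1 (by decide)
  have hadj : (matGraph M).Adj u v := ⟨hne, h1, (hs u v) ▸ h1⟩
  apply graph_eq_of_gmat_eq
  rw [gmat_pivot hadj, gmat_matGraph hs hd,
    gmat_matGraph (pivotMat_symm hs u v) (pivotMat_diag M u v)]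


/-- The span of the columns (restricted to `X`) of vertices outside `X`. -/
noncomputable def crossW (𝒢 : BipGraph V) (X : Set V) : Submodule (ZMod 2) (↥X → ZMod 2) :=
  Submodule.span (ZMod 2) {f | ∃ u : V, u ∉ X ∧ f = fun x : ↥X => gmat 𝒢.graph x.1 u}

lemma avoiding_invariant {X : Set V} {𝒢 𝒢' : BipGraph V} (h : PivotEquivAvoiding X 𝒢 𝒢') :
    (∀ x : V, x ∈ X → (x ∈ 𝒢'.left ↔ x ∈ 𝒢.left)) ∧
    (∀ x : V, x ∈ X → (x ∈ 𝒢'.right ↔ x ∈ 𝒢.right)) ∧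
    (∀ u : V, u ∉ X → (fun x : ↥X => gmat 𝒢'.graph x.1 u) ∈ crossW 𝒢 X) ∧
    (∀ y : ↥X, (fun x : ↥X => gmat 𝒢'.graph x.1 y.1 + gmat 𝒢.graph x.1 y.1) ∈ crossW 𝒢 X) := by
  induction h with
  | refl =>
    refine ⟨fun x _ => Iff.rfl, fun x _ => Iff.rfl, fun u hu => ?_, fun y => ?_⟩
    · exact Submodule.subset_span ⟨u, hu, rfl⟩
    · have : (fun x : ↥X => gmat 𝒢.graph x.1 y.1 + gmat 𝒢.graph x.1 y.1) = 0 := by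
        funext x; exact CharTwo.add_self_eq_zero _
      rw [this]; exact Submodule.zero_mem _
  | @tail b c _ hstep ih =>
    obtain ⟨hl, hr, hcol, hD⟩ := ih
    obtain ⟨u, v, hu, hv, hadj, hul, hvr, hgraph, hleft, hright⟩ := hstep
    set N := gmat b.graph with hN
    have hmat : gmat c.graph = pivotMat N u v := by rw [hgraph]; exact gmat_pivot hadj
    have hNs : ∀ a b', N a b' = N b' a := gmat_symm _
    have huv1 : N u v = 1 := gmat_eq_one_iff.2 hadj
    have hvu1 : N v u = 1 := by rw [hNs]; exact huv1
    have hne : u ≠ v := hadj.ne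
    refine ⟨?_, ?_, ?_, ?_⟩
    · intro x hx
      have hxu : x ≠ u := fun h => hu (h ▸ hx)
      have hxv : x ≠ v := fun h => hv (h ▸ hx)
      rw [hleft]
      simp only [Set.mem_insert_iff, Set.mem_diff, Set.mem_singleton_iff]
      rw [← hl x hx]
      constructor
      · rintro (rfl | ⟨h1, _⟩)
        · exact absurd rfl hxv
        · exact h1
      · intro h1; exact Or.inr ⟨h1, hxu⟩
    · intro x hx
      have hxu : x ≠ u := fun h => hu (h ▸ hx)
      have hxv : x ≠ v := fun h => hv (h ▸ hx)
      rw [hright]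
      simp only [Set.mem_insert_iff, Set.mem_diff, Set.mem_singleton_iff]
      rw [← hr x hx]
      constructor
      · rintro (rfl | ⟨h1, _⟩)
        · exact absurd rfl hxu
        · exact h1
      · intro h1; exact Or.inr ⟨h1, hxv⟩
    · intro w hw
      by_cases hwu : w = u
      · subst hwu
        have : (fun x : ↥X => gmat c.graph x.1 w) = fun x : ↥X => N x.1 v := by
          funext x
          have hxu : x.1 ≠ w := fun h => hw (h ▸ x.2)
          have hxv : x.1 ≠ v := fun h => hv (h ▸ x.2)
          rw [hmat]
          unfold pivotMat
          rw [if_neg hxu, Equiv.swap_apply_left,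
            Equiv.swap_apply_of_ne_of_ne hxu hxv,
            if_neg (by tauto)]
          ring
        rw [this]; exact hcol v hv
      by_cases hwv : w = v
      · subst hwv
        have : (fun x : ↥X => gmat c.graph x.1 w) = fun x : ↥X => N x.1 u := by
          funext x
          have hxu : x.1 ≠ u := fun h => hu (h ▸ x.2)
          have hxv : x.1 ≠ w := fun h => hw (h ▸ x.2)
          rw [hmat]
          unfold pivotMat
          rw [if_neg hxv, Equiv.swap_apply_right,
            Equiv.swap_apply_of_ne_of_ne hxu hxv,
            if_neg (by tauto)]
          ring
        rw [this]; exact hcol u hu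
      · have : (fun x : ↥X => gmat c.graph x.1 w) =
            (fun x : ↥X => N x.1 w) + N v w • (fun x : ↥X => N x.1 u)
              + N u w • (fun x : ↥X => N x.1 v) := by
          funext x
          have hxu : x.1 ≠ u := fun h => hu (h ▸ x.2)
          have hxv : x.1 ≠ v := fun h => hv (h ▸ x.2)
          have hxw : x.1 ≠ w := fun h => hw (h ▸ x.2)
          rw [hmat]
          unfold pivotMat
          rw [if_neg hxw, Equiv.swap_apply_of_ne_of_ne hxu hxv,
            Equiv.swap_apply_of_ne_of_ne hwu hwv,
            if_pos (by tauto)]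
          simp only [Pi.add_apply, Pi.smul_apply, smul_eq_mul]
          rw [hNs u x.1, hNs v x.1]
          ring
        rw [this]
        exact Submodule.add_mem _
          (Submodule.add_mem _ (hcol w hw) (Submodule.smul_mem _ _ (hcol u hu)))
          (Submodule.smul_mem _ _ (hcol v hv))
    · intro y
      have : (fun x : ↥X => gmat c.graph x.1 y.1 + gmat 𝒢.graph x.1 y.1) =
          (fun x : ↥X => N x.1 y.1 + gmat 𝒢.graph x.1 y.1)
            + N v y.1 • (fun x : ↥X => N x.1 u) + N u y.1 • (fun x : ↥X => N x.1 v) := by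
        funext x
        have hxu : x.1 ≠ u := fun h => hu (h ▸ x.2)
        have hxv : x.1 ≠ v := fun h => hv (h ▸ x.2)
        have hyu : y.1 ≠ u := fun h => hu (h ▸ y.2)
        have hyv : y.1 ≠ v := fun h => hv (h ▸ y.2)
        rw [hmat]
        unfold pivotMat
        by_cases hxy : x.1 = y.1
        · rw [if_pos hxy]
          simp only [Pi.add_apply, Pi.smul_apply, smul_eq_mul]
          have hNd : ∀ a, N a a = 0 := gmat_diag _
          rw [← hxy, gmat_diag, hNd, hNs v x.1, hNs u x.1,
            mul_comm (N x.1 v) (N x.1 u)]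
          ring_nf
          rw [mul_two]
          exact (CharTwo.add_self_eq_zero (N x.1 u * N x.1 v)).symm
        · rw [if_neg hxy, Equiv.swap_apply_of_ne_of_ne hxu hxv,
            Equiv.swap_apply_of_ne_of_ne hyu hyv, if_pos (by tauto)]
          simp only [Pi.add_apply, Pi.smul_apply, smul_eq_mul]
          rw [hNs u x.1, hNs v x.1]
          ring
      rw [this]
      exact Submodule.add_mem _
        (Submodule.add_mem _ (hD y) (Submodule.smul_mem _ _ (hcol u hu)))
        (Submodule.smul_mem _ _ (hcol v hv))

section Construction

variable (𝒢 : BipGraph V) (X : Set V) (r : ℕ) (P Q : Matrix ↥X (Fin r) (ZMod 2))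

/-- cross columns of the big graph at stage `m` -/
noncomputable def cvec (m : ℕ) (i : Fin (2*r)) : ↥X → ZMod 2 := fun x =>
  if h : i.1 < r then (if i.1 < m then Q x ⟨i.1, h⟩ else P x ⟨i.1, h⟩)
  else (if i.1 - r < m then P x ⟨i.1 - r, by omega⟩ else Q x ⟨i.1 - r, by omega⟩)

/-- the adjacency matrix of the big graph at stage `m` -/
noncomputable def bigMat (m : ℕ) : Matrix (↥X ⊕ Fin (2*r)) (↥X ⊕ Fin (2*r)) (ZMod 2) :=
  fun a b =>
    match a, b with
    | Sum.inl x, Sum.inl y =>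
        gmat 𝒢.graph x.1 y.1 +
          ∑ k : Fin r, (if k.1 < m then P x k * Q y k + Q x k * P y k else 0)
    | Sum.inl x, Sum.inr i => cvec X r P Q m i x
    | Sum.inr i, Sum.inl x => cvec X r P Q m i x
    | Sum.inr i, Sum.inr j => if (i.1 + r = j.1 ∨ j.1 + r = i.1) then 1 else 0

lemma bigMat_symm (m : ℕ) : ∀ a b, bigMat 𝒢 X r P Q m a b = bigMat 𝒢 X r P Q m b a := by
  rintro (x | i) (y | j)
  · show gmat _ _ _ + _ = gmat _ _ _ + _
    rw [gmat_symm]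
    congr 1
    refine Finset.sum_congr rfl fun k _ => ?_
    by_cases h : k.1 < m
    · rw [if_pos h, if_pos h]; ring
    · rw [if_neg h, if_neg h]
  · rfl
  · rfl
  · show (if (i.1 + r = j.1 ∨ j.1 + r = i.1) then (1 : ZMod 2) else 0) =
      (if (j.1 + r = i.1 ∨ i.1 + r = j.1) then (1 : ZMod 2) else 0)
    rw [if_congr (Iff.intro Or.symm Or.symm) rfl rfl]

lemma bigMat_diag (m : ℕ) : ∀ a, bigMat 𝒢 X r P Q m a a = 0 := by
  rintro (x | i)
  · show gmat _ _ _ + _ = 0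
    rw [gmat_diag]
    rw [Finset.sum_eq_zero fun k _ => ?_, add_zero]
    by_cases h : k.1 < m
    · rw [if_pos h, mul_comm]
      exact CharTwo.add_self_eq_zero _
    · rw [if_neg h]
  · show (if (i.1 + r = i.1 ∨ i.1 + r = i.1) then (1 : ZMod 2) else 0) = 0
    rw [if_neg (by have := i.2; omega)]

lemma bip_not_left_iff (ℋ : BipGraph V) (x : V) : x ∉ ℋ.left ↔ x ∈ ℋ.right := by
  constructor
  · intro h
    have : x ∈ ℋ.left ∪ ℋ.right := ℋ.union ▸ Set.mem_univ _
    exact ((Set.mem_union _ _ _).1 this).resolve_left h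
  · intro h hl
    exact Set.disjoint_left.mp ℋ.disj hl h

lemma bip_not_right_iff (ℋ : BipGraph V) (x : V) : x ∉ ℋ.right ↔ x ∈ ℋ.left := by
  constructor
  · intro h
    have : x ∈ ℋ.left ∪ ℋ.right := ℋ.union ▸ Set.mem_univ _
    exact ((Set.mem_union _ _ _).1 this).resolve_right h
  · intro h hr
    exact Set.disjoint_left.mp ℋ.disj h hr

lemma gmat_zero_of_sides {ℋ : BipGraph V} {x y : V}
    (h : ¬(x ∈ ℋ.left ↔ y ∈ ℋ.right)) : gmat ℋ.graph x y = 0 := by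
  unfold gmat
  rw [if_neg (fun hadj => h (ℋ.cross x y hadj))]

variable {𝒢 r P Q} in
/-- the big bipartite graph at stage `m` -/
noncomputable def GstepB (hP : ∀ (x : ↥X) (k : Fin r), (x : V) ∉ 𝒢.left → P x k = 0)
    (hQ : ∀ (x : ↥X) (k : Fin r), (x : V) ∉ 𝒢.right → Q x k = 0) (m : ℕ) : BipGraph (↥X ⊕ Fin (2*r)) where
  graph := matGraph (bigMat 𝒢 X r P Q m)
  left := {a | match a with
    | Sum.inl x => (x : V) ∈ 𝒢.left
    | Sum.inr i => if i.1 < r then i.1 < m else ¬(i.1 - r < m)}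
  right := {a | match a with
    | Sum.inl x => (x : V) ∈ 𝒢.right
    | Sum.inr i => if i.1 < r then ¬(i.1 < m) else i.1 - r < m}
  disj := by
    rw [Set.disjoint_left]
    rintro (x | i) ha hb
    · exact Set.disjoint_left.mp 𝒢.disj ha hb
    · simp only [Set.mem_setOf_eq] at ha hb
      by_cases h : i.1 < r
      · rw [if_pos h] at ha hb; exact hb ha
      · rw [if_neg h] at ha hb; exact ha hb
  union := by
    ext a
    simp only [Set.mem_union, Set.mem_univ, iff_true]
    rcases a with x | i
    · have : (x : V) ∈ 𝒢.left ∪ 𝒢.right := 𝒢.union ▸ Set.mem_univ _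
      simpa using this
    · simp only [Set.mem_setOf_eq]
      by_cases h : i.1 < r
      · rw [if_pos h, if_pos h]; tauto
      · rw [if_neg h, if_neg h]; tauto
  cross := by
    rintro (x | i) (y | j) hadj
    · -- inl-inl
      obtain ⟨hne, h1, -⟩ := hadj
      show (x : V) ∈ 𝒢.left ↔ (y : V) ∈ 𝒢.right
      by_cases hxL : (x : V) ∈ 𝒢.left
      · simp only [hxL, true_iff]
        by_contra hyR
        have hy : (y : V) ∉ 𝒢.right := hyR
        have hzero : bigMat 𝒢 X r P Q m (Sum.inl x) (Sum.inl y) = 0 := by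
          show gmat _ _ _ + _ = 0
          rw [gmat_zero_of_sides (by tauto)]
          rw [Finset.sum_eq_zero fun k _ => ?_, add_zero]
          have hqx : Q x k = 0 := hQ x k (Set.disjoint_left.mp 𝒢.disj hxL)
          have hqy : Q y k = 0 := hQ y k hy
          by_cases h : k.1 < m
          · rw [if_pos h, hqx, hqy]; ring
          · rw [if_neg h]
        rw [hzero] at h1
        exact absurd h1 (by decide)
      · simp only [hxL, false_iff]
        intro hyR
        have hzero : bigMat 𝒢 X r P Q m (Sum.inl x) (Sum.inl y) = 0 := by
          show gmat _ _ _ + _ = 0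
          rw [gmat_zero_of_sides (by tauto)]
          rw [Finset.sum_eq_zero fun k _ => ?_, add_zero]
          have hpx : P x k = 0 := hP x k hxL
          have hpy : P y k = 0 := hP y k (Set.disjoint_right.mp 𝒢.disj hyR)
          by_cases h : k.1 < m
          · rw [if_pos h, hpx, hpy]; ring
          · rw [if_neg h]
        rw [hzero] at h1
        exact absurd h1 (by decide)
    · -- inl-inr
      obtain ⟨hne, h1, -⟩ := hadj
      show (x : V) ∈ 𝒢.left ↔ (if j.1 < r then ¬(j.1 < m) else j.1 - r < m)
      have h1' : cvec X r P Q m j x = 1 := h1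
      unfold cvec at h1'
      by_cases hj : j.1 < r
      · rw [dif_pos hj] at h1'
        rw [if_pos hj]
        by_cases hjm : j.1 < m
        · rw [if_pos hjm] at h1'
          have hx : (x : V) ∈ 𝒢.right := by
            by_contra hx
            rw [hQ x _ hx] at h1'
            exact absurd h1' (by decide)
          simp only [hjm, not_true_eq_false, iff_false]
          exact fun hl => Set.disjoint_left.mp 𝒢.disj hl hx
        · rw [if_neg hjm] at h1'
          have hx : (x : V) ∈ 𝒢.left := by
            by_contra hx
            rw [hP x _ hx] at h1'
            exact absurd h1' (by decide)
          simp only [hjm, not_false_eq_true, iff_true]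
          exact hx
      · rw [dif_neg hj] at h1'
        rw [if_neg hj]
        by_cases hjm : j.1 - r < m
        · rw [if_pos hjm] at h1'
          have hx : (x : V) ∈ 𝒢.left := by
            by_contra hx
            rw [hP x _ hx] at h1'
            exact absurd h1' (by decide)
          simp only [hjm, iff_true]
          exact hx
        · rw [if_neg hjm] at h1'
          have hx : (x : V) ∈ 𝒢.right := by
            by_contra hx
            rw [hQ x _ hx] at h1'
            exact absurd h1' (by decide)
          simp only [hjm, iff_false]
          exact fun hl => Set.disjoint_left.mp 𝒢.disj hl hx
    · -- inr-inl
      obtain ⟨hne, h1, -⟩ := hadj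
      show (if i.1 < r then i.1 < m else ¬(i.1 - r < m)) ↔ (y : V) ∈ 𝒢.right
      have h1' : cvec X r P Q m i y = 1 := h1
      unfold cvec at h1'
      by_cases hi : i.1 < r
      · rw [dif_pos hi] at h1'
        rw [if_pos hi]
        by_cases him : i.1 < m
        · rw [if_pos him] at h1'
          have hx : (y : V) ∈ 𝒢.right := by
            by_contra hx
            rw [hQ y _ hx] at h1'
            exact absurd h1' (by decide)
          simp only [him, true_iff]
          exact hx
        · rw [if_neg him] at h1'
          have hx : (y : V) ∈ 𝒢.left := by
            by_contra hx
            rw [hP y _ hx] at h1'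
            exact absurd h1' (by decide)
          simp only [him, false_iff]
          exact fun hr => Set.disjoint_left.mp 𝒢.disj hx hr
      · rw [dif_neg hi] at h1'
        rw [if_neg hi]
        by_cases him : i.1 - r < m
        · rw [if_pos him] at h1'
          have hx : (y : V) ∈ 𝒢.left := by
            by_contra hx
            rw [hP y _ hx] at h1'
            exact absurd h1' (by decide)
          simp only [him, not_true_eq_false, false_iff]
          exact fun hr => Set.disjoint_left.mp 𝒢.disj hx hr
        · rw [if_neg him] at h1'
          have hx : (y : V) ∈ 𝒢.right := by
            by_contra hx
            rw [hQ y _ hx] at h1'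
            exact absurd h1' (by decide)
          simp only [him, not_false_eq_true, true_iff]
          exact hx
    · -- inr-inr
      obtain ⟨hne, h1, -⟩ := hadj
      show (if i.1 < r then i.1 < m else ¬(i.1 - r < m)) ↔
        (if j.1 < r then ¬(j.1 < m) else j.1 - r < m)
      have hij : i.1 + r = j.1 ∨ j.1 + r = i.1 := by
        by_contra hc
        have : bigMat 𝒢 X r P Q m (Sum.inr i) (Sum.inr j) = 0 := by
          show (if (i.1 + r = j.1 ∨ j.1 + r = i.1) then (1 : ZMod 2) else 0) = 0
          rw [if_neg hc]
        rw [h1] at this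
        exact absurd this (by decide)
      have hi2 := i.2
      have hj2 := j.2
      rcases hij with hij | hij
      · rw [if_pos (by omega), if_neg (by omega)]
        constructor
        · intro h; omega
        · intro h; omega
      · rw [if_neg (by omega), if_pos (by omega)]
        constructor
        · intro h; omega
        · intro h; omega

end Construction

section StepLemma

variable (𝒢 : BipGraph V) (X : Set V) (r : ℕ) (P Q : Matrix ↥X (Fin r) (ZMod 2))

lemma bigMat_inl_inl (m : ℕ) (x y : ↥X) :
    bigMat 𝒢 X r P Q m (Sum.inl x) (Sum.inl y) =
      gmat 𝒢.graph x.1 y.1 +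
        ∑ k : Fin r, (if k.1 < m then P x k * Q y k + Q x k * P y k else 0) := rfl

lemma bigMat_inl_inr (m : ℕ) (x : ↥X) (i : Fin (2*r)) :
    bigMat 𝒢 X r P Q m (Sum.inl x) (Sum.inr i) = cvec X r P Q m i x := rfl

lemma bigMat_inr_inl (m : ℕ) (x : ↥X) (i : Fin (2*r)) :
    bigMat 𝒢 X r P Q m (Sum.inr i) (Sum.inl x) = cvec X r P Q m i x := rfl

lemma bigMat_inr_inr (m : ℕ) (i j : Fin (2*r)) :
    bigMat 𝒢 X r P Q m (Sum.inr i) (Sum.inr j) =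
      if (i.1 + r = j.1 ∨ j.1 + r = i.1) then 1 else 0 := rfl

lemma cvec_at_u {m : ℕ} (hm : m < r) (i : Fin (2*r)) (hi : i.1 = m + r) :
    cvec X r P Q m i = fun x => Q x ⟨m, hm⟩ := by
  funext x
  unfold cvec
  rw [dif_neg (by omega), if_neg (by omega)]
  congr 1
  exact Fin.ext (show i.1 - r = m by omega)

lemma cvec_at_v {m : ℕ} (hm : m < r) (i : Fin (2*r)) (hi : i.1 = m) :
    cvec X r P Q m i = fun x => P x ⟨m, hm⟩ := by
  funext x
  unfold cvec
  rw [dif_pos (by omega), if_neg (by omega)]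
  congr 1
  exact Fin.ext (show i.1 = m by omega)

lemma cvec_succ_at_u {m : ℕ} (hm : m < r) (i : Fin (2*r)) (hi : i.1 = m + r) :
    cvec X r P Q (m+1) i = fun x => P x ⟨m, hm⟩ := by
  funext x
  unfold cvec
  rw [dif_neg (by omega), if_pos (by omega)]
  congr 1
  exact Fin.ext (show i.1 - r = m by omega)

lemma cvec_succ_at_v {m : ℕ} (hm : m < r) (i : Fin (2*r)) (hi : i.1 = m) :
    cvec X r P Q (m+1) i = fun x => Q x ⟨m, hm⟩ := by
  funext x
  unfold cvec
  rw [dif_pos (by omega), if_pos (by omega)]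
  congr 1
  exact Fin.ext (show i.1 = m by omega)

lemma cvec_succ_other {m : ℕ} (i : Fin (2*r)) (him : i.1 ≠ m) (himr : i.1 ≠ m + r) :
    cvec X r P Q (m+1) i = cvec X r P Q m i := by
  funext x
  unfold cvec
  by_cases hi : i.1 < r
  · rw [dif_pos hi, dif_pos hi]
    by_cases h : i.1 < m
    · rw [if_pos (by omega), if_pos h]
    · rw [if_neg (by omega), if_neg h]
  · rw [dif_neg hi, dif_neg hi]
    by_cases h : i.1 - r < m
    · rw [if_pos (by omega), if_pos h]
    · have := i.2
      rw [if_neg (by omega), if_neg h]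

lemma sum_step {m : ℕ} (hm : m < r) (f : Fin r → ZMod 2) :
    (∑ k : Fin r, if k.1 < m + 1 then f k else 0) =
      (∑ k : Fin r, if k.1 < m then f k else 0) + f ⟨m, hm⟩ := by
  have hterm : ∀ k : Fin r, (if k.1 < m + 1 then f k else 0) =
      (if k.1 < m then f k else 0) + (if k = ⟨m, hm⟩ then f k else 0) := by
    intro k
    by_cases h1 : k.1 < m
    · have hne : k ≠ (⟨m, hm⟩ : Fin r) := by
        intro he
        have hkm : k.1 = m := by rw [he]
        omega
      rw [if_pos (by omega), if_pos h1, if_neg hne, add_zero]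
    · by_cases h2 : k.1 = m
      · have hk : k = ⟨m, hm⟩ := Fin.ext h2
        subst hk
        rw [if_pos (by omega), if_neg h1, if_pos rfl, zero_add]
      · rw [if_neg (by omega), if_neg h1, if_neg (fun he => h2 (by rw [he])), add_zero]
  rw [Finset.sum_congr rfl fun k _ => hterm k, Finset.sum_add_distrib]
  congr 1
  rw [Finset.sum_ite_eq' Finset.univ (⟨m, hm⟩ : Fin r) f, if_pos (Finset.mem_univ _)]

lemma cswap_left (u v : V) : Equiv.swap u v u = v := Equiv.swap_apply_left u v

lemma cswap_right (u v : V) : Equiv.swap u v v = u := Equiv.swap_apply_right u v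

lemma cswap_other {u v a : V} (h1 : a ≠ u) (h2 : a ≠ v) : Equiv.swap u v a = a :=
  Equiv.swap_apply_of_ne_of_ne h1 h2

lemma bigMat_succ {m : ℕ} (hm : m < r) :
    bigMat 𝒢 X r P Q (m+1) =
      pivotMat (bigMat 𝒢 X r P Q m)
        (Sum.inr ⟨m + r, by omega⟩) (Sum.inr ⟨m, by omega⟩) := by
  set u : ↥X ⊕ Fin (2*r) := Sum.inr ⟨m + r, by omega⟩ with hu
  set v : ↥X ⊕ Fin (2*r) := Sum.inr ⟨m, by omega⟩ with hv
  have hsym := bigMat_symm 𝒢 X r P Q m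
  have hulx : ∀ x : ↥X, (Sum.inl x : ↥X ⊕ Fin (2*r)) ≠ u := by intro x; rw [hu]; simp
  have hvlx : ∀ x : ↥X, (Sum.inl x : ↥X ⊕ Fin (2*r)) ≠ v := by intro x; rw [hv]; simp
  have hrunel : ∀ i : Fin (2*r), i.1 ≠ m + r → (Sum.inr i : ↥X ⊕ Fin (2*r)) ≠ u := by
    intro i hi h
    rw [hu] at h
    exact hi (congrArg Fin.val (Sum.inr.inj h))
  have hrvnel : ∀ i : Fin (2*r), i.1 ≠ m → (Sum.inr i : ↥X ⊕ Fin (2*r)) ≠ v := by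
    intro i hi h
    rw [hv] at h
    exact hi (congrArg Fin.val (Sum.inr.inj h))
  have hrueq : ∀ i : Fin (2*r), i.1 = m + r → (Sum.inr i : ↥X ⊕ Fin (2*r)) = u := by
    intro i hi
    rw [hu]
    exact congrArg Sum.inr (Fin.ext hi)
  have hrveq : ∀ i : Fin (2*r), i.1 = m → (Sum.inr i : ↥X ⊕ Fin (2*r)) = v := by
    intro i hi
    rw [hv]
    exact congrArg Sum.inr (Fin.ext hi)
  funext a b
  unfold pivotMat
  rcases a with x | i
  · rcases b with y | j
    · -- inl-inl
      by_cases hxy : (Sum.inl x : ↥X ⊕ Fin (2*r)) = Sum.inl y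
      · rw [cite_pos hxy]
        obtain rfl : x = y := Sum.inl.inj hxy
        exact bigMat_diag 𝒢 X r P Q (m+1) (Sum.inl x)
      · rw [cite_neg hxy, cswap_other (hulx x) (hvlx x), cswap_other (hulx y) (hvlx y)]
        split_ifs with hg
        · rw [hsym u (Sum.inl x), hsym v (Sum.inl x), hsym u (Sum.inl y), hsym v (Sum.inl y)]
          rw [hu, hv, bigMat_inl_inr, bigMat_inl_inr, bigMat_inl_inr, bigMat_inl_inr,
            bigMat_inl_inl, bigMat_inl_inl,
            cvec_at_u X r P Q hm _ rfl, cvec_at_v X r P Q hm _ rfl,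
            sum_step r hm (fun k => P x k * Q y k + Q x k * P y k)]
          ring
        · exact absurd ⟨hulx x, hvlx x, hulx y, hvlx y⟩ hg
    · -- inl-inr
      rw [cite_neg (by simp), cswap_other (hulx x) (hvlx x)]
      by_cases hjm : j.1 = m
      · rw [hrveq j hjm, cswap_right]
        split_ifs with hg
        · exact absurd rfl hg.2.2.2
        · rw [hu, hv, bigMat_inl_inr, bigMat_inl_inr, cvec_at_u X r P Q hm _ rfl,
            cvec_succ_at_v X r P Q hm _ rfl, add_zero]
      · by_cases hjmr : j.1 = m + r
        · rw [hrueq j hjmr, cswap_left]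
          split_ifs with hg
          · exact absurd rfl hg.2.2.1
          · rw [hu, hv, bigMat_inl_inr, bigMat_inl_inr, cvec_at_v X r P Q hm _ rfl,
              cvec_succ_at_u X r P Q hm _ rfl, add_zero]
        · rw [cswap_other (hrunel j hjmr) (hrvnel j hjm)]
          split_ifs with hg
          · rw [hu, hv, bigMat_inl_inr, bigMat_inl_inr, bigMat_inr_inr, bigMat_inr_inr]
            rw [if_neg (show ¬(m + r = j.1 ∨ j.1 + r = m) by have := j.2; omega),
              if_neg (show ¬((m + r) + r = j.1 ∨ j.1 + r = m + r) by have := j.2; omega)]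
            rw [mul_zero, mul_zero, add_zero, add_zero]
            exact congrFun (cvec_succ_other X r P Q j hjm hjmr) x
          · exact absurd ⟨hulx x, hvlx x, hrunel j hjmr, hrvnel j hjm⟩ hg
  · rcases b with y | j
    · -- inr-inl
      rw [cite_neg (by simp), cswap_other (hulx y) (hvlx y)]
      by_cases him : i.1 = m
      · rw [hrveq i him, cswap_right]
        split_ifs with hg
        · exact absurd rfl hg.2.1
        · rw [hu, hv, bigMat_inr_inl, bigMat_inr_inl, cvec_at_u X r P Q hm _ rfl,
            cvec_succ_at_v X r P Q hm _ rfl, add_zero]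
      · by_cases himr : i.1 = m + r
        · rw [hrueq i himr, cswap_left]
          split_ifs with hg
          · exact absurd rfl hg.1
          · rw [hu, hv, bigMat_inr_inl, bigMat_inr_inl, cvec_at_v X r P Q hm _ rfl,
              cvec_succ_at_u X r P Q hm _ rfl, add_zero]
        · rw [cswap_other (hrunel i himr) (hrvnel i him)]
          split_ifs with hg
          · rw [hsym u (Sum.inr i), hsym v (Sum.inr i)]
            rw [hu, hv, bigMat_inr_inl, bigMat_inr_inl, bigMat_inr_inr, bigMat_inr_inr]
            rw [if_neg (show ¬(i.1 + r = m + r ∨ (m + r) + r = i.1) by have := i.2; omega),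
              if_neg (show ¬(i.1 + r = m ∨ m + r = i.1) by have := i.2; omega)]
            rw [zero_mul, zero_mul, add_zero, add_zero]
            exact congrFun (cvec_succ_other X r P Q i him himr) y
          · exact absurd ⟨hrunel i himr, hrvnel i him, hulx y, hvlx y⟩ hg
    · -- inr-inr
      have hi2 := i.2
      have hj2 := j.2
      by_cases hij : (Sum.inr i : ↥X ⊕ Fin (2*r)) = Sum.inr j
      · rw [cite_pos hij]
        obtain rfl : i = j := Sum.inr.inj hij
        exact bigMat_diag 𝒢 X r P Q (m+1) (Sum.inr i)
      · rw [cite_neg hij]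
        have hij'' : i.1 ≠ j.1 := fun h => hij (congrArg Sum.inr (Fin.ext h))
        by_cases hi0 : i.1 = m + r
        · rw [hrueq i hi0, cswap_left]
          split_ifs with hg
          · exact absurd rfl hg.1
          · by_cases hj1 : j.1 = m
            · rw [hrveq j hj1, cswap_right, hu, hv, bigMat_inr_inr, bigMat_inr_inr]
              rw [if_pos (show ((m + r) + r = m ∨ m + r = m + r) by omega),
                if_pos (show (m + r = m + r ∨ (m + r) + r = m) by omega), add_zero]
            · have hj0 : j.1 ≠ m + r := fun h => hij'' (hi0.trans h.symm)
              rw [cswap_other (hrunel j hj0) (hrvnel j hj1), hu, hv, bigMat_inr_inr,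
                bigMat_inr_inr]
              rw [if_neg (show ¬((m + r) + r = j.1 ∨ j.1 + r = m + r) by omega),
                if_neg (show ¬(m + r = j.1 ∨ j.1 + r = m) by omega), add_zero]
        · by_cases hi1 : i.1 = m
          · rw [hrveq i hi1, cswap_right]
            split_ifs with hg
            · exact absurd rfl hg.2.1
            · by_cases hj0 : j.1 = m + r
              · rw [hrueq j hj0, cswap_left, hu, hv, bigMat_inr_inr, bigMat_inr_inr]
                rw [if_pos (show (m + r = m + r ∨ (m + r) + r = m) by omega),
                  if_pos (show ((m + r) + r = m ∨ m + r = m + r) by omega), add_zero]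
              · have hj1 : j.1 ≠ m := fun h => hij'' (hi1.trans h.symm)
                rw [cswap_other (hrunel j hj0) (hrvnel j hj1), hu, hv, bigMat_inr_inr,
                  bigMat_inr_inr]
                rw [if_neg (show ¬(m + r = j.1 ∨ j.1 + r = m) by omega),
                  if_neg (show ¬((m + r) + r = j.1 ∨ j.1 + r = m + r) by omega), add_zero]
          · rw [cswap_other (hrunel i hi0) (hrvnel i hi1)]
            by_cases hj0 : j.1 = m + r
            · rw [hrueq j hj0, cswap_left]
              split_ifs with hg
              · exact absurd rfl hg.2.2.1
              · rw [hu, hv, bigMat_inr_inr, bigMat_inr_inr]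
                rw [if_neg (show ¬(i.1 + r = m + r ∨ (m + r) + r = i.1) by omega),
                  if_neg (show ¬(i.1 + r = m ∨ m + r = i.1) by omega), add_zero]
            · by_cases hj1 : j.1 = m
              · rw [hrveq j hj1, cswap_right]
                split_ifs with hg
                · exact absurd rfl hg.2.2.2
                · rw [hu, hv, bigMat_inr_inr, bigMat_inr_inr]
                  rw [if_neg (show ¬(i.1 + r = m ∨ m + r = i.1) by omega),
                    if_neg (show ¬(i.1 + r = m + r ∨ (m + r) + r = i.1) by omega), add_zero]
              · rw [cswap_other (hrunel j hj0) (hrvnel j hj1)]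
                split_ifs with hg
                · rw [hu, hv, bigMat_inr_inr, bigMat_inr_inr, bigMat_inr_inr, bigMat_inr_inr,
                    bigMat_inr_inr, bigMat_inr_inr]
                  rw [if_neg (show ¬((m + r) + r = i.1 ∨ i.1 + r = m + r) by omega),
                    if_neg (show ¬(m + r = j.1 ∨ j.1 + r = m) by omega),
                    if_neg (show ¬(m + r = i.1 ∨ i.1 + r = m) by omega),
                    if_neg (show ¬((m + r) + r = j.1 ∨ j.1 + r = m + r) by omega)]
                  rw [mul_zero, add_zero, add_zero]
                · exact absurd ⟨hrunel i hi0, hrvnel i hi1, hrunel j hj0, hrvnel j hj1⟩ hg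

variable {𝒢 r P Q} in
lemma step_big (hP : ∀ (x : ↥X) (k : Fin r), (x : V) ∉ 𝒢.left → P x k = 0)
    (hQ : ∀ (x : ↥X) (k : Fin r), (x : V) ∉ 𝒢.right → Q x k = 0) {m : ℕ} (hm : m < r) :
    BipPivotStep (GstepB X hP hQ m) (GstepB X hP hQ (m+1)) := by
  have e1 : bigMat 𝒢 X r P Q m (Sum.inr ⟨m + r, by omega⟩) (Sum.inr ⟨m, by omega⟩) = 1 := by
    rw [bigMat_inr_inr, if_pos (show (m + r) + r = m ∨ m + r = m + r by omega)]
  have e2 : bigMat 𝒢 X r P Q m (Sum.inr ⟨m, by omega⟩) (Sum.inr ⟨m + r, by omega⟩) = 1 := by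
    rw [bigMat_inr_inr, if_pos (show m + r = m + r ∨ (m + r) + r = m by omega)]
  have hne : (Sum.inr ⟨m + r, by omega⟩ : ↥X ⊕ Fin (2*r)) ≠ Sum.inr ⟨m, by omega⟩ := by
    intro h
    have : m + r = m := congrArg Fin.val (Sum.inr.inj h)
    omega
  refine ⟨Sum.inr ⟨m + r, by omega⟩, Sum.inr ⟨m, by omega⟩, ⟨hne, e1, e2⟩, ?_, ?_, ?_, ?_, ?_⟩
  · show (if m + r < r then m + r < m else ¬(m + r - r < m))
    rw [if_neg (by omega)]
    omega
  · show (if m < r then ¬(m < m) else m - r < m)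
    rw [if_pos hm]
    omega
  · show matGraph (bigMat 𝒢 X r P Q (m+1)) = pivot (matGraph (bigMat 𝒢 X r P Q m)) _ _
    rw [matGraph_pivot (bigMat_symm 𝒢 X r P Q m) (bigMat_diag 𝒢 X r P Q m) e1]
    exact congrArg matGraph (bigMat_succ 𝒢 X r P Q hm)
  · ext a
    rcases a with x | i
    · simp only [Set.mem_insert_iff, Set.mem_diff, Set.mem_singleton_iff]
      constructor
      · intro h
        exact Or.inr ⟨h, by simp⟩
      · rintro (h | ⟨h, -⟩)
        · exact absurd h (by simp)
        · exact h
    · have ee1 : (Sum.inr i = (Sum.inr ⟨m, by omega⟩ : ↥X ⊕ Fin (2*r))) ↔ i.1 = m :=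
        ⟨fun h => congrArg Fin.val (Sum.inr.inj h), fun h => congrArg Sum.inr (Fin.ext h)⟩
      have ee2 : (Sum.inr i = (Sum.inr ⟨m + r, by omega⟩ : ↥X ⊕ Fin (2*r))) ↔ i.1 = m + r :=
        ⟨fun h => congrArg Fin.val (Sum.inr.inj h), fun h => congrArg Sum.inr (Fin.ext h)⟩
      show (if i.1 < r then i.1 < m + 1 else ¬(i.1 - r < m + 1)) ↔ _
      simp only [Set.mem_insert_iff, Set.mem_diff, Set.mem_singleton_iff, Set.mem_setOf_eq]
      have hmem : (Sum.inr i ∈ (GstepB X hP hQ m).left) =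
        (if i.1 < r then i.1 < m else ¬(i.1 - r < m)) := rfl
      rw [hmem, ee1, ee2]
      have hi2 := i.2
      by_cases hi : i.1 < r
      · rw [if_pos hi, if_pos hi]
        omega
      · rw [if_neg hi, if_neg hi]
        omega
  · ext a
    rcases a with x | i
    · simp only [Set.mem_insert_iff, Set.mem_diff, Set.mem_singleton_iff]
      constructor
      · intro h
        exact Or.inr ⟨h, by simp⟩
      · rintro (h | ⟨h, -⟩)
        · exact absurd h (by simp)
        · exact h
    · have ee1 : (Sum.inr i = (Sum.inr ⟨m, by omega⟩ : ↥X ⊕ Fin (2*r))) ↔ i.1 = m :=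
        ⟨fun h => congrArg Fin.val (Sum.inr.inj h), fun h => congrArg Sum.inr (Fin.ext h)⟩
      have ee2 : (Sum.inr i = (Sum.inr ⟨m + r, by omega⟩ : ↥X ⊕ Fin (2*r))) ↔ i.1 = m + r :=
        ⟨fun h => congrArg Fin.val (Sum.inr.inj h), fun h => congrArg Sum.inr (Fin.ext h)⟩
      show (if i.1 < r then ¬(i.1 < m + 1) else i.1 - r < m + 1) ↔ _
      simp only [Set.mem_insert_iff, Set.mem_diff, Set.mem_singleton_iff, Set.mem_setOf_eq]
      have hmem : (Sum.inr i ∈ (GstepB X hP hQ m).right) =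
        (if i.1 < r then ¬(i.1 < m) else i.1 - r < m) := rfl
      rw [hmem, ee2, ee1]
      have hi2 := i.2
      by_cases hi : i.1 < r
      · rw [if_pos hi, if_pos hi]
        omega
      · rw [if_neg hi, if_neg hi]
        omega

variable {𝒢 r P Q} in
lemma chain_big (hP : ∀ (x : ↥X) (k : Fin r), (x : V) ∉ 𝒢.left → P x k = 0)
    (hQ : ∀ (x : ↥X) (k : Fin r), (x : V) ∉ 𝒢.right → Q x k = 0) :
    ∀ m ≤ r, PivotEquiv (GstepB X hP hQ 0) (GstepB X hP hQ m) := by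
  intro m
  induction m with
  | zero => exact fun _ => Relation.ReflTransGen.refl
  | succ n ih =>
    intro hn
    exact Relation.ReflTransGen.tail (ih (by omega)) (step_big X hP hQ (by omega))

end StepLemma


/-- Functions supported on `S`. -/
def suppSub (X S : Set V) : Submodule (ZMod 2) (↥X → ZMod 2) where
  carrier := {f | ∀ x : ↥X, (x : V) ∉ S → f x = 0}
  add_mem' := fun hf hg x hx => by
    rw [Pi.add_apply, hf x hx, hg x hx, add_zero]
  zero_mem' := fun x hx => rfl
  smul_mem' := fun c f hf x hx => by
    rw [Pi.smul_apply, hf x hx, smul_zero]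

lemma mulVec_single_col {α β : Type} [Fintype β] [DecidableEq β]
    (A : Matrix α β (ZMod 2)) (j : β) :
    A.mulVec (Pi.single j 1) = fun i => A i j := by
  funext i
  rw [Matrix.mulVec, dotProduct]
  rw [Finset.sum_eq_single j (fun b _ hb => by rw [Pi.single_eq_of_ne hb, mul_zero])
    (fun hj => absurd (Finset.mem_univ j) hj)]
  rw [Pi.single_eq_same, mul_one]

lemma mulVec_eq_sum_cols {α β : Type} [Fintype β] (A : Matrix α β (ZMod 2)) (c : β → ZMod 2) :
    A.mulVec c = ∑ j : β, c j • (fun i => A i j) := by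
  funext i
  rw [Matrix.mulVec, dotProduct, Finset.sum_apply]
  exact Finset.sum_congr rfl fun j _ => by rw [Pi.smul_apply, smul_eq_mul, mul_comm]

set_option maxHeartbeats 1000000 in
/-- If `𝒢'` is obtained from the bipartite graph `𝒢` by pivoting only on
edges with neither end in `X`, then `𝒢'[X]` is a `ρ_G(X)`-pivot-perturbation of `𝒢[X]`. -/
theorem bip_pivot_perturbation_of_avoiding {V : Type} [Fintype V]
    (𝒢 𝒢' : BipGraph V) (X : Set V) (h : PivotEquivAvoiding X 𝒢 𝒢') :
    IsPivotPerturbation (cutRank 𝒢.graph X) (𝒢'.induce X) (𝒢.induce X) := by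
  classical
  obtain ⟨hLiff, hRiff, hcol, hD⟩ := avoiding_invariant h
  set W := crossW 𝒢 X with hWdef
  -- the difference matrix on X
  set D : Matrix ↥X ↥X (ZMod 2) :=
    fun x y => gmat 𝒢'.graph x.1 y.1 + gmat 𝒢.graph x.1 y.1 with hDdef
  have hDsymm : ∀ x y, D x y = D y x := by
    intro x y
    rw [hDdef]
    show gmat 𝒢'.graph x.1 y.1 + gmat 𝒢.graph x.1 y.1 = _
    rw [gmat_symm 𝒢'.graph, gmat_symm 𝒢.graph]
  have hDzero : ∀ x y : ↥X, ((x : V) ∈ 𝒢.left ↔ (y : V) ∈ 𝒢.left) → D x y = 0 := by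
    intro x y hxy
    have h1 : gmat 𝒢.graph x.1 y.1 = 0 := by
      apply gmat_zero_of_sides
      intro hiff
      by_cases hx : (x : V) ∈ 𝒢.left
      · exact Set.disjoint_left.mp 𝒢.disj (hxy.mp hx) (hiff.mp hx)
      · exact hx (hiff.mpr ((bip_not_left_iff 𝒢 _).mp (fun hy => hx (hxy.mpr hy))))
    have h2 : gmat 𝒢'.graph x.1 y.1 = 0 := by
      apply gmat_zero_of_sides
      intro hiff
      rw [hLiff x.1 x.2, hRiff y.1 y.2] at hiff
      by_cases hx : (x : V) ∈ 𝒢.left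
      · exact Set.disjoint_left.mp 𝒢.disj (hxy.mp hx) (hiff.mp hx)
      · exact hx (hiff.mpr ((bip_not_left_iff 𝒢 _).mp (fun hy => hx (hxy.mpr hy))))
    show gmat 𝒢'.graph x.1 y.1 + gmat 𝒢.graph x.1 y.1 = 0
    rw [h1, h2, add_zero]
  have hDcolW : ∀ y : ↥X, (fun x => D x y) ∈ W := fun y => hD y
  -- the L-R part of D
  set E : Matrix ↥X ↥X (ZMod 2) :=
    fun x y => if (y : V) ∈ 𝒢.right then D x y else 0 with hEdef
  have hEcol : ∀ y : ↥X, (fun x => E x y) ∈ W ⊓ suppSub X 𝒢.left := by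
    intro y
    by_cases hy : (y : V) ∈ 𝒢.right
    · have hcoleq : (fun x => E x y) = fun x => D x y := by
        funext x
        show (if (y : V) ∈ 𝒢.right then D x y else 0) = D x y
        rw [if_pos hy]
      rw [hcoleq]
      refine Submodule.mem_inf.2 ⟨hDcolW y, ?_⟩
      intro x hx
      apply hDzero
      constructor
      · intro hxl; exact absurd hxl hx
      · intro hyl; exact (Set.disjoint_left.mp 𝒢.disj hyl hy).elim
    · have hcoleq : (fun x => E x y) = 0 := by
        funext x
        show (if (y : V) ∈ 𝒢.right then D x y else 0) = 0
        rw [if_neg hy]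
      rw [hcoleq]
      exact Submodule.zero_mem _
  have hErow : ∀ x : ↥X, (fun y => E x y) ∈ W ⊓ suppSub X 𝒢.right := by
    intro x
    by_cases hx : (x : V) ∈ 𝒢.left
    · have hroweq : (fun y => E x y) = fun y => D y x := by
        funext y
        show (if (y : V) ∈ 𝒢.right then D x y else 0) = D y x
        by_cases hy : (y : V) ∈ 𝒢.right
        · rw [if_pos hy, hDsymm]
        · rw [if_neg hy]
          rw [(hDzero y x ⟨fun _ => hx, fun _ => (bip_not_right_iff 𝒢 _).mp hy⟩ : D y x = 0)]
      rw [hroweq]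
      refine Submodule.mem_inf.2 ⟨hDcolW x, ?_⟩
      intro y hy
      exact hDzero y x ⟨fun _ => hx, fun _ => (bip_not_right_iff 𝒢 _).mp hy⟩
    · have hroweq : (fun y => E x y) = 0 := by
        funext y
        show (if (y : V) ∈ 𝒢.right then D x y else 0) = 0
        by_cases hy : (y : V) ∈ 𝒢.right
        · rw [if_pos hy]
          apply hDzero
          constructor
          · intro hxl; exact absurd hxl hx
          · intro hyl; exact absurd hy (Set.disjoint_left.mp 𝒢.disj hyl)
        · rw [if_neg hy]
      rw [hroweq]
      exact Submodule.zero_mem _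
  -- rank bound
  set r := E.rank with hrdef
  have hrangeE : LinearMap.range E.mulVecLin ≤ W ⊓ suppSub X 𝒢.left := by
    rintro f ⟨c, rfl⟩
    show E.mulVec c ∈ _
    rw [mulVec_eq_sum_cols]
    exact Submodule.sum_mem _ fun y _ => Submodule.smul_mem _ _ (hEcol y)
  have hrangeET : LinearMap.range E.transpose.mulVecLin ≤ W ⊓ suppSub X 𝒢.right := by
    rintro f ⟨c, rfl⟩
    show E.transpose.mulVec c ∈ _
    rw [mulVec_eq_sum_cols]
    exact Submodule.sum_mem _ fun x _ => Submodule.smul_mem _ _ (hErow x)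
  have hdisj : (W ⊓ suppSub X 𝒢.left) ⊓ (W ⊓ suppSub X 𝒢.right) = ⊥ := by
    rw [Submodule.eq_bot_iff]
    rintro f ⟨⟨-, h1⟩, ⟨-, h2⟩⟩
    funext x
    by_cases hx : (x : V) ∈ 𝒢.left
    · exact h2 x (Set.disjoint_left.mp 𝒢.disj hx)
    · exact h1 x hx
  have hboundL : r ≤ Module.finrank (ZMod 2) (W ⊓ suppSub X 𝒢.left : Submodule (ZMod 2) _) := by
    rw [hrdef]
    exact Submodule.finrank_mono hrangeE
  have hboundR : r ≤ Module.finrank (ZMod 2) (W ⊓ suppSub X 𝒢.right : Submodule (ZMod 2) _) := by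
    have := Matrix.rank_transpose E
    rw [hrdef, ← this]
    exact Submodule.finrank_mono hrangeET
  have hWle : W ≤ LinearMap.range (Matrix.of fun (x : X) (y : ↥Xᶜ) =>
      if 𝒢.graph.Adj x.1 y.1 then (1 : ZMod 2) else 0).mulVecLin := by
    rw [hWdef]
    apply Submodule.span_le.2
    rintro f ⟨u, hu, rfl⟩
    refine ⟨Pi.single (⟨u, hu⟩ : ↥Xᶜ) 1, ?_⟩
    show Matrix.mulVec _ _ = _
    rw [mulVec_single_col]
    rfl
  have hbound : 2 * r ≤ cutRank 𝒢.graph X := by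
    have hsum : Module.finrank (ZMod 2) (W ⊓ suppSub X 𝒢.left : Submodule (ZMod 2) _) +
        Module.finrank (ZMod 2) (W ⊓ suppSub X 𝒢.right : Submodule (ZMod 2) _) ≤
        Module.finrank (ZMod 2) W := by
      rw [← Submodule.finrank_sup_add_finrank_inf_eq, hdisj, finrank_bot, add_zero]
      exact Submodule.finrank_mono (sup_le inf_le_left inf_le_left)
    have hWr : Module.finrank (ZMod 2) W ≤ cutRank 𝒢.graph X := by
      have hcut : cutRank 𝒢.graph X = Module.finrank (ZMod 2)
          ↥(LinearMap.range (Matrix.of fun (x : X) (y : ↥Xᶜ) =>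
            if 𝒢.graph.Adj x.1 y.1 then (1 : ZMod 2) else 0).mulVecLin) := rfl
      rw [hcut]
      exact Submodule.finrank_mono hWle
    omega
  -- factorization of E
  have hcolE : ∀ y : ↥X, (fun x => E x y) ∈ LinearMap.range E.mulVecLin := by
    intro y
    refine ⟨Pi.single y 1, ?_⟩
    show E.mulVec _ = _
    rw [mulVec_single_col]
  have hfr : Module.finrank (ZMod 2) (LinearMap.range E.mulVecLin) = r := rfl
  let b : Module.Basis (Fin r) (ZMod 2) (LinearMap.range E.mulVecLin) :=
    Module.finBasisOfFinrankEq _ _ hfr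
  set P : Matrix ↥X (Fin r) (ZMod 2) := fun x k => (b k).1 x with hPdef
  set Q : Matrix ↥X (Fin r) (ZMod 2) :=
    fun y k => b.repr ⟨fun x => E x y, hcolE y⟩ k with hQdef
  have hfact : ∀ x y : ↥X, E x y = ∑ k, Q y k * P x k := by
    intro x y
    have h4 : E x y = (↑(∑ k, b.repr ⟨fun x => E x y, hcolE y⟩ k • b k) : ↥X → ZMod 2) x := by
      rw [b.sum_repr]
    rw [h4, AddSubmonoidClass.coe_finset_sum, Finset.sum_apply]
    exact Finset.sum_congr rfl fun k _ => by
      rw [Submodule.coe_smul, Pi.smul_apply, smul_eq_mul]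
  have hP : ∀ (x : ↥X) (k : Fin r), (x : V) ∉ 𝒢.left → P x k = 0 := by
    intro x k hx
    exact (Submodule.mem_inf.1 (hrangeE (b k).2)).2 x hx
  have hQ : ∀ (y : ↥X) (k : Fin r), (y : V) ∉ 𝒢.right → Q y k = 0 := by
    intro y k hy
    have hzero : (⟨fun x => E x y, hcolE y⟩ : LinearMap.range E.mulVecLin) = 0 := by
      apply Subtype.ext
      funext x
      show (if (y : V) ∈ 𝒢.right then D x y else 0) = 0
      rw [if_neg hy]
    rw [hQdef]
    show b.repr ⟨fun x => E x y, hcolE y⟩ k = 0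
    rw [hzero, map_zero]
    rfl
  have hDfact : ∀ x y : ↥X, D x y = ∑ k, (P x k * Q y k + Q x k * P y k) := by
    intro x y
    rw [Finset.sum_add_distrib]
    have e1 : ∑ k, P x k * Q y k = E x y := by
      rw [hfact x y]
      exact Finset.sum_congr rfl fun k _ => mul_comm _ _
    have e2 : ∑ k, Q x k * P y k = E y x := by
      rw [hfact y x]
    rw [e1, e2]
    by_cases hy : (y : V) ∈ 𝒢.right
    · by_cases hx : (x : V) ∈ 𝒢.right
      · have hxy : D x y = 0 := hDzero x y
          ⟨fun hl => absurd hl (Set.disjoint_right.mp 𝒢.disj hx),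
           fun hl => absurd hl (Set.disjoint_right.mp 𝒢.disj hy)⟩
        show D x y = (if (y : V) ∈ 𝒢.right then D x y else 0) +
          (if (x : V) ∈ 𝒢.right then D y x else 0)
        rw [if_pos hy, if_pos hx, hxy, hDsymm y x, hxy, add_zero]
      · show D x y = (if (y : V) ∈ 𝒢.right then D x y else 0) +
          (if (x : V) ∈ 𝒢.right then D y x else 0)
        rw [if_pos hy, if_neg hx, add_zero]
    · by_cases hx : (x : V) ∈ 𝒢.right
      · show D x y = (if (y : V) ∈ 𝒢.right then D x y else 0) +
          (if (x : V) ∈ 𝒢.right then D y x else 0)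
        rw [if_neg hy, if_pos hx, zero_add, hDsymm x y]
      · have hxy : D x y = 0 := hDzero x y
          ⟨fun _ => (bip_not_right_iff 𝒢 _).mp hy,
           fun _ => (bip_not_right_iff 𝒢 _).mp hx⟩
        show D x y = (if (y : V) ∈ 𝒢.right then D x y else 0) +
          (if (x : V) ∈ 𝒢.right then D y x else 0)
        rw [if_neg hy, if_neg hx, add_zero, hxy]
  -- assemble the perturbation witness
  refine ⟨2 * r, hbound, GstepB X hP hQ 0, ?_, ?_⟩
  · -- 𝒢'.induce X is a pivot-minor
    refine ⟨GstepB X hP hQ r, chain_big X hP hQ r le_rfl, ?_, ?_⟩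
    · intro x y
      simp only [Function.Embedding.coeFn_mk]
      have hbm : bigMat 𝒢 X r P Q r (Sum.inl x) (Sum.inl y) = gmat 𝒢'.graph x.1 y.1 := by
        rw [bigMat_inl_inl]
        have hsum : (∑ k : Fin r, if k.1 < r then P x k * Q y k + Q x k * P y k else 0) =
            ∑ k : Fin r, (P x k * Q y k + Q x k * P y k) :=
          Finset.sum_congr rfl fun k _ => if_pos k.2
        rw [hsum, ← hDfact x y]
        show gmat 𝒢.graph x.1 y.1 + (gmat 𝒢'.graph x.1 y.1 + gmat 𝒢.graph x.1 y.1) = _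
        rw [add_comm (gmat 𝒢'.graph x.1 y.1), ← add_assoc, CharTwo.add_self_eq_zero, zero_add]
      constructor
      · intro hadj
        have hne : x ≠ y := hadj.ne
        refine ⟨fun he => hne (Sum.inl.inj he), ?_, ?_⟩
        · rw [hbm]
          exact gmat_eq_one_iff.2 hadj
        · rw [bigMat_symm 𝒢 X r P Q r, hbm]
          exact gmat_eq_one_iff.2 hadj
      · rintro ⟨hne, h1, -⟩
        rw [hbm] at h1
        exact gmat_eq_one_iff.1 h1
    · intro x
      simp only [Function.Embedding.coeFn_mk]
      show (x : V) ∈ 𝒢'.left ↔ _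
      rw [hLiff x.1 x.2]
      exact Iff.rfl
  · -- 𝒢.induce X is a pivot-minor (trivially)
    refine ⟨GstepB X hP hQ 0, Relation.ReflTransGen.refl, ?_, ?_⟩
    · intro x y
      simp only [Function.Embedding.coeFn_mk]
      have hbm : bigMat 𝒢 X r P Q 0 (Sum.inl x) (Sum.inl y) = gmat 𝒢.graph x.1 y.1 := by
        rw [bigMat_inl_inl]
        rw [Finset.sum_eq_zero fun k _ => if_neg (by omega), add_zero]
      constructor
      · intro hadj
        have hne : x ≠ y := hadj.ne
        refine ⟨fun he => hne (Sum.inl.inj he), ?_, ?_⟩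
        · rw [hbm]
          exact gmat_eq_one_iff.2 hadj
        · rw [bigMat_symm 𝒢 X r P Q 0, hbm]
          exact gmat_eq_one_iff.2 hadj
      · rintro ⟨hne, h1, -⟩
        rw [hbm] at h1
        exact gmat_eq_one_iff.1 h1
    · intro x
      simp only [Function.Embedding.coeFn_mk]
      exact Iff.rfl


end EP
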